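/- Let G be the subgroup of the group of bijections of ℝ⁴ generated by the three maps T₂(g) = (g₀,g₁,1−g₂,g₃), T₃(g) = (g₀,g₁,g₂,1−g₃), and J_N(g) = ((g₀+g₁−g₂+g₃)/2, (g₀+g₁+g₂−g₃)/2, (−g₀+g₁+g₂+g₃)/2, (g₀−g₁+g₂+g₃)/2). Then: (i) G is isomorphic to the symmetric group S₄; (ii) the mirror map M(g) = (g₁,g₀,g₃,g₂) belongs to G; (iii) every element of G maps the set Π_G onto Π_G. -/

import Mathlib

open Real MeasureTheory

noncomputable section

namespace Heun

/-- The entire function `R(z)`. -/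
def Rc (r α : ℝ) (z : ℂ) : ℂ :=
  ∏' l : ℕ, ((1 - Complex.exp (-(2 * (l : ℂ) + 1) * r * α + 2 * Complex.I * r * z)) *
             (1 - Complex.exp (-(2 * (l : ℂ) + 1) * r * α - 2 * Complex.I * r * z)))

/-- `R` restricted to the real axis (it is real-valued there). -/
def Rr (r α : ℝ) (x : ℝ) : ℝ := (Rc r α x).re

/-- The constant `p = 2r ∏_{k≥1} (1 - e^{-2krα})²`. -/
def pC (r α : ℝ) : ℝ := 2 * r * ∏' k : ℕ, (1 - Real.exp (-2 * ((k : ℝ) + 1) * r * α)) ^ 2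

/-- The entire function `s(z) = e^{irz} R(z + iα/2)/(ip)`. -/
def sC (r α : ℝ) (z : ℂ) : ℂ :=
  Complex.exp (Complex.I * r * z) * Rc r α (z + Complex.I * α / 2) / (Complex.I * pC r α)

/-- `s` restricted to the real axis (it is real-valued there). -/
def sr (r α : ℝ) (x : ℝ) : ℝ := (sC r α x).re

/-- The Weierstrass elliptic function with periods `π/r` and `iα`. -/
def wp (r α : ℝ) (z : ℂ) : ℂ :=
  1 / z ^ 2 + ∑' m : ℤ × ℤ,
    if m = (0, 0) then 0 else
      (1 / (z - (m.1 : ℂ) * ((π / r : ℝ) : ℂ) - Complex.I * (m.2 : ℂ) * α) ^ 2 -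
       1 / ((m.1 : ℂ) * ((π / r : ℝ) : ℂ) + Complex.I * (m.2 : ℂ) * α) ^ 2)

/-- The half-periods `ω₀ = 0`, `ω₁ = π/(2r)`, `ω₂ = iα/2`, `ω₃ = -ω₁ - ω₂`. -/
def om (r α : ℝ) : Fin 4 → ℂ :=
  ![0, ((π / (2 * r) : ℝ) : ℂ), Complex.I * α / 2, -((π / (2 * r) : ℝ) : ℂ) - Complex.I * α / 2]

/-- The Heun potential `V(g;x)` (real-valued for real `x`). -/
def Vr (r α : ℝ) (g : Fin 4 → ℝ) (x : ℝ) : ℝ :=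
  (∑ t : Fin 4, ((g t * (g t - 1) : ℝ) : ℂ) * wp r α ((x : ℂ) + om r α t)).re

/-- `s_g = (g₀+g₁+g₂+g₃)/2`. -/
def sg (g : Fin 4 → ℝ) : ℝ := (g 0 + g 1 + g 2 + g 3) / 2

/-- The dual coupling `g' = J_N g`. -/
def gdual (g : Fin 4 → ℝ) : Fin 4 → ℝ :=
  ![(g 0 + g 1 - g 2 + g 3) / 2, (g 0 + g 1 + g 2 - g 3) / 2,
    (-g 0 + g 1 + g 2 + g 3) / 2, (g 0 - g 1 + g 2 + g 3) / 2]

/-- The kernel `S(g;x,y) = (R(x+y)R(x-y))^{-s_g}`. -/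
def Sk (r α : ℝ) (g : Fin 4 → ℝ) (x y : ℝ) : ℝ :=
  (Rr r α (x + y) * Rr r α (x - y)) ^ (-(sg g))

/-- The weight function `w(g;x)`. -/
def wt (r α : ℝ) (g : Fin 4 → ℝ) (x : ℝ) : ℝ :=
  pC r α ^ (2 * g 0 + 2 * g 1) * sr r α x ^ (2 * g 0) *
    sr r α (π / (2 * r) - x) ^ (2 * g 1) * Rr r α x ^ (2 * g 2) *
    Rr r α (π / (2 * r) - x) ^ (2 * g 3)

/-- The kernel `Ψ(g;x,y) = w(g;x)^{1/2} S(g;x,y) w(g';y)^{1/2}`. -/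
def Psi (r α : ℝ) (g : Fin 4 → ℝ) (x y : ℝ) : ℝ :=
  Real.sqrt (wt r α g x) * Sk r α g x y * Real.sqrt (wt r α (gdual g) y)

/-- `Π̃ = {g : g₀, g₁ > -1/2}`. -/
def PiTilde : Set (Fin 4 → ℝ) := {g | -(1/2 : ℝ) < g 0 ∧ -(1/2 : ℝ) < g 1}

/-- `Π = {g : g₀, g₁, g₀', g₁' > -1/2}`. -/
def PiSet : Set (Fin 4 → ℝ) :=
  {g | -(1/2 : ℝ) < g 0 ∧ -(1/2 : ℝ) < g 1 ∧
       -(1/2 : ℝ) < gdual g 0 ∧ -(1/2 : ℝ) < gdual g 1}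

/-- `Π_r = {g ∈ Π : s_g > 0}`. -/
def PiR : Set (Fin 4 → ℝ) := {g | g ∈ PiSet ∧ 0 < sg g}

/-- `Π_G = {g ∈ Π_r : g₀ + g₁ + 2 > g₂ + g₃}`. -/
def PiG : Set (Fin 4 → ℝ) := {g | g ∈ PiR ∧ g 2 + g 3 < g 0 + g 1 + 2}

/-- The domain `D(g₀,g₁) = s(x)^{g₀} s(π/(2r)-x)^{g₁} 𝓓`, where `𝓓` consists of the
`C²` functions on `[0, π/(2r)]` with vanishing derivative at both endpoints. -/
def HeunDom (r α g0 g1 : ℝ) : Set (ℝ → ℂ) :=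
  {φ | ∃ d : ℝ → ℂ, ContDiff ℝ 2 d ∧ deriv d 0 = 0 ∧ deriv d (π / (2 * r)) = 0 ∧
    ∀ x, φ x = ((sr r α x ^ g0 * sr r α (π / (2 * r) - x) ^ g1 : ℝ) : ℂ) * d x}

/-- The action of the Heun differential operator `H(g) = -d²/dx² + V(g;x)`. -/
def HeunOp (r α : ℝ) (g : Fin 4 → ℝ) (φ : ℝ → ℂ) (x : ℝ) : ℂ :=
  -deriv (deriv φ) x + (Vr r α g x : ℂ) * φ x

/-- The set of eigenvalues of the Heun operator on the domain `D(g₀,g₁)`. -/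
def HeunSpec (r α : ℝ) (g : Fin 4 → ℝ) : Set ℝ :=
  {E | ∃ φ ∈ HeunDom r α (g 0) (g 1), φ ≠ 0 ∧
      ∀ x ∈ Set.Ioo 0 (π / (2 * r)), HeunOp r α g φ x = (E : ℂ) * φ x}


/-- The map `T₂ : g ↦ (g₀, g₁, 1-g₂, g₃)`. -/
def mapT2 (g : Fin 4 → ℝ) : Fin 4 → ℝ := ![g 0, g 1, 1 - g 2, g 3]

/-- The map `T₃ : g ↦ (g₀, g₁, g₂, 1-g₃)`. -/
def mapT3 (g : Fin 4 → ℝ) : Fin 4 → ℝ := ![g 0, g 1, g 2, 1 - g 3]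

/-- The mirror map `M : g ↦ (g₁, g₀, g₃, g₂)`. -/
def mapM (g : Fin 4 → ℝ) : Fin 4 → ℝ := ![g 1, g 0, g 3, g 2]

lemma mapT2_involutive : Function.Involutive mapT2 := by
  intro g; funext i; fin_cases i <;>
    simp [mapT2, Matrix.cons_val_zero, Matrix.cons_val_one, Matrix.head_cons]

lemma mapT3_involutive : Function.Involutive mapT3 := by
  intro g; funext i; fin_cases i <;>
    simp [mapT3, Matrix.cons_val_zero, Matrix.cons_val_one, Matrix.head_cons]

lemma mapM_involutive : Function.Involutive mapM := by
  intro g; funext i; fin_cases i <;>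
    simp [mapM, Matrix.cons_val_zero, Matrix.cons_val_one, Matrix.head_cons]

lemma gdual_involutive : Function.Involutive gdual := by
  intro g; funext i; fin_cases i <;>
    simp [gdual, Matrix.cons_val_zero, Matrix.cons_val_one, Matrix.head_cons] <;> ring

/-- `T₂` as a bijection of `ℝ⁴`. -/
def permT2 : Equiv.Perm (Fin 4 → ℝ) := mapT2_involutive.toPerm

/-- `T₃` as a bijection of `ℝ⁴`. -/
def permT3 : Equiv.Perm (Fin 4 → ℝ) := mapT3_involutive.toPerm

/-- `J_N` as a bijection of `ℝ⁴`. -/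
def permJ : Equiv.Perm (Fin 4 → ℝ) := gdual_involutive.toPerm

/-- The mirror map as a bijection of `ℝ⁴`. -/
def permM : Equiv.Perm (Fin 4 → ℝ) := mapM_involutive.toPerm

/-! ### Auxiliary machinery for statement8 -/

/-- The "root coordinates" of `g`. -/
def lamv (g : Fin 4 → ℝ) : Fin 4 → ℝ :=
  ![g 0 - g 1 + 2 * g 2 - 1, g 0 - g 1 - 2 * g 2 + 1,
    -g 0 + g 1 + 2 * g 3 - 1, -g 0 + g 1 - 2 * g 3 + 1]

/-- Reconstruction of `g` from `W = g₀ + g₁` and the root coordinates. -/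
def reconv (W : ℝ) (l : Fin 4 → ℝ) : Fin 4 → ℝ :=
  ![W / 2 + (l 0 + l 1) / 4, W / 2 - (l 0 + l 1) / 4,
    (l 0 - l 1) / 4 + 1 / 2, (l 2 - l 3) / 4 + 1 / 2]

/-- The action of `S₄` on `ℝ⁴`. -/
def act (σ : Equiv.Perm (Fin 4)) (g : Fin 4 → ℝ) : Fin 4 → ℝ :=
  reconv (g 0 + g 1) (fun i => lamv g (σ.symm i))

lemma lamv_sum (g : Fin 4 → ℝ) : lamv g 0 + lamv g 1 + lamv g 2 + lamv g 3 = 0 := by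
  simp [lamv]; ring

lemma lamv_reconv (W : ℝ) (l : Fin 4 → ℝ) (h : l 0 + l 1 + l 2 + l 3 = 0) :
    lamv (reconv W l) = l := by
  funext i
  fin_cases i <;> simp [lamv, reconv] <;> linarith

lemma reconv_W (W : ℝ) (l : Fin 4 → ℝ) : reconv W l 0 + reconv W l 1 = W := by
  simp [reconv]

lemma reconv_lamv (g : Fin 4 → ℝ) : reconv (g 0 + g 1) (lamv g) = g := by
  funext i
  fin_cases i <;> simp [lamv, reconv] <;> ring

lemma sum_perm (l : Fin 4 → ℝ) (σ : Equiv.Perm (Fin 4)) :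
    l (σ.symm 0) + l (σ.symm 1) + l (σ.symm 2) + l (σ.symm 3) =
      l 0 + l 1 + l 2 + l 3 := by
  have h := Equiv.sum_comp σ.symm l
  rw [Fin.sum_univ_four] at h
  rw [h, Fin.sum_univ_four]

lemma act_mul (σ τ : Equiv.Perm (Fin 4)) (g : Fin 4 → ℝ) :
    act σ (act τ g) = act (σ * τ) g := by
  unfold act
  rw [reconv_W, lamv_reconv _ _ (by rw [sum_perm]; exact lamv_sum g)]
  rfl

lemma act_one (g : Fin 4 → ℝ) : act 1 g = g := by
  unfold act
  exact reconv_lamv g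

/-- The embedding of `S₄` into the bijections of `ℝ⁴`. -/
def permOf : Equiv.Perm (Fin 4) →* Equiv.Perm (Fin 4 → ℝ) where
  toFun σ :=
    { toFun := act σ
      invFun := act σ⁻¹
      left_inv := fun g => by rw [act_mul, inv_mul_cancel, act_one]
      right_inv := fun g => by rw [act_mul, mul_inv_cancel, act_one] }
  map_one' := Equiv.ext fun g => act_one g
  map_mul' σ τ := Equiv.ext fun g => (act_mul σ τ g).symm

lemma permOf_apply (σ : Equiv.Perm (Fin 4)) (g : Fin 4 → ℝ) : permOf σ g = act σ g := rfl

lemma l0_inj : Function.Injective (![1, 2, 3, -6] : Fin 4 → ℝ) := by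
  intro a b hab
  fin_cases a <;> fin_cases b <;> simp_all <;> norm_num at hab

lemma permOf_injective : Function.Injective permOf := by
  refine (injective_iff_map_eq_one permOf).2 (fun σ h => ?_)
  set l₀ : Fin 4 → ℝ := ![1, 2, 3, -6] with hl₀
  have hsum : l₀ 0 + l₀ 1 + l₀ 2 + l₀ 3 = 0 := by simp only [hl₀, Matrix.cons_val_zero, Matrix.cons_val_one, Matrix.cons_val_two, Matrix.cons_val_three, Matrix.head_cons, Matrix.tail_cons]; norm_num
  have h1 : act σ (reconv 0 l₀) = reconv 0 l₀ := by
    have := congrArg (fun e : Equiv.Perm (Fin 4 → ℝ) => e (reconv 0 l₀)) h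
    simpa [permOf_apply] using this
  have h2 : lamv (act σ (reconv 0 l₀)) = lamv (reconv 0 l₀) := by rw [h1]
  rw [lamv_reconv _ _ hsum] at h2
  unfold act at h2
  rw [reconv_W] at h2
  rw [lamv_reconv _ _ (by rw [lamv_reconv _ _ hsum, sum_perm, hsum]),
    lamv_reconv _ _ hsum] at h2
  have h3 : ∀ i, l₀ (σ.symm i) = l₀ i := fun i => congrFun h2 i
  have h4 : ∀ i, σ.symm i = i := by
    intro i
    have := h3 i
    exact l0_inj this
  refine Equiv.ext fun i => ?_
  have h5 := h4 (σ i)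
  rw [Equiv.symm_apply_apply] at h5
  rw [Equiv.Perm.one_apply, ← h5]

lemma permOf_swap01 : permOf (Equiv.swap 0 1) = permT2 := by
  refine Equiv.ext fun g => funext fun i => ?_
  fin_cases i <;>
    simp [permOf_apply, act, reconv, lamv, permT2, mapT2,
      Function.Involutive.coe_toPerm, Equiv.swap_apply_def] <;> ring

lemma permOf_swap23 : permOf (Equiv.swap 2 3) = permT3 := by
  refine Equiv.ext fun g => funext fun i => ?_
  fin_cases i <;>
    simp [permOf_apply, act, reconv, lamv, permT3, mapT3,
      Function.Involutive.coe_toPerm, Equiv.swap_apply_def] <;> ring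

lemma permOf_swap02 : permOf (Equiv.swap 0 2) = permJ := by
  refine Equiv.ext fun g => funext fun i => ?_
  fin_cases i <;>
    simp [permOf_apply, act, reconv, lamv, permJ, gdual,
      Function.Involutive.coe_toPerm, Equiv.swap_apply_def] <;> ring

lemma permOf_M : permOf (Equiv.swap 0 2 * Equiv.swap 1 3) = permM := by
  refine Equiv.ext fun g => funext fun i => ?_
  fin_cases i <;>
    simp [permOf_apply, act, reconv, lamv, permM, mapM,
      Function.Involutive.coe_toPerm, Equiv.swap_apply_def, Equiv.Perm.mul_def,
      Equiv.symm_trans_apply] <;> ring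

lemma swaps_generate :
    Subgroup.closure ({Equiv.swap 0 1, Equiv.swap 2 3, Equiv.swap 0 2} :
      Set (Equiv.Perm (Fin 4))) = ⊤ := by
  set K := Subgroup.closure ({Equiv.swap 0 1, Equiv.swap 2 3, Equiv.swap 0 2} :
      Set (Equiv.Perm (Fin 4)))
  have h01 : Equiv.swap (0:Fin 4) 1 ∈ K := Subgroup.subset_closure (by simp)
  have h23 : Equiv.swap (2:Fin 4) 3 ∈ K := Subgroup.subset_closure (by simp)
  have h02 : Equiv.swap (0:Fin 4) 2 ∈ K := Subgroup.subset_closure (by simp)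
  have h12 : Equiv.swap (1:Fin 4) 2 ∈ K := by
    have : Equiv.swap (1:Fin 4) 2 = Equiv.swap 0 1 * Equiv.swap 0 2 * Equiv.swap 0 1 := by decide
    rw [this]; exact K.mul_mem (K.mul_mem h01 h02) h01
  have h03 : Equiv.swap (0:Fin 4) 3 ∈ K := by
    have : Equiv.swap (0:Fin 4) 3 = Equiv.swap 0 2 * Equiv.swap 2 3 * Equiv.swap 0 2 := by decide
    rw [this]; exact K.mul_mem (K.mul_mem h02 h23) h02
  have h13 : Equiv.swap (1:Fin 4) 3 ∈ K := by
    have : Equiv.swap (1:Fin 4) 3 = Equiv.swap 1 2 * Equiv.swap 2 3 * Equiv.swap 1 2 := by decide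
    rw [this]; exact K.mul_mem (K.mul_mem h12 h23) h12
  rw [eq_top_iff, ← Equiv.Perm.closure_isSwap]
  refine Subgroup.closure_le K |>.2 ?_
  rintro σ ⟨a, b, hab, rfl⟩
  simp only [SetLike.mem_coe]
  fin_cases a <;> fin_cases b <;>
    first
    | exact absurd rfl hab
    | exact h01
    | exact h23
    | exact h02
    | exact h12
    | exact h03
    | exact h13
    | (rw [Equiv.swap_comm]
       first
       | exact h01
       | exact h23
       | exact h02
       | exact h12
       | exact h03
       | exact h13)

lemma range_permOf :
    permOf.range = Subgroup.closure ({permT2, permT3, permJ} :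
      Set (Equiv.Perm (Fin 4 → ℝ))) := by
  rw [MonoidHom.range_eq_map, ← swaps_generate, MonoidHom.map_closure]
  congr 1
  rw [Set.image_insert_eq, Set.image_insert_eq, Set.image_singleton,
    permOf_swap01, permOf_swap23, permOf_swap02]

lemma mem_PiG_iff (g : Fin 4 → ℝ) :
    g ∈ PiG ↔ (-(1/2 : ℝ) < g 0 ∧ -(1/2 : ℝ) < g 1 ∧
      -1 < g 0 + g 1 - g 2 + g 3 ∧ -1 < g 0 + g 1 + g 2 - g 3 ∧
      0 < g 0 + g 1 + g 2 + g 3 ∧ g 2 + g 3 < g 0 + g 1 + 2) := by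
  simp only [PiG, PiR, PiSet, sg, gdual, Set.mem_setOf_eq]
  constructor
  · rintro ⟨⟨⟨h0, h1, h2, h3⟩, h4⟩, h5⟩
    simp only [Matrix.cons_val_zero, Matrix.cons_val_one, Matrix.head_cons] at h2 h3
    refine ⟨h0, h1, by linarith, by linarith, by linarith, h5⟩
  · rintro ⟨h0, h1, h2, h3, h4, h5⟩
    refine ⟨⟨⟨h0, h1, ?_, ?_⟩, by linarith⟩, h5⟩ <;>
      simp only [Matrix.cons_val_zero, Matrix.cons_val_one, Matrix.head_cons] <;> linarith

lemma mapT2_mem_PiG {g : Fin 4 → ℝ} (hg : g ∈ PiG) : mapT2 g ∈ PiG := by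
  rw [mem_PiG_iff] at hg ⊢
  obtain ⟨h0, h1, h2, h3, h4, h5⟩ := hg
  simp only [mapT2, Matrix.cons_val_zero, Matrix.cons_val_one, Matrix.head_cons,
    Matrix.cons_val_two, Matrix.tail_cons, Matrix.cons_val_three]
  refine ⟨h0, h1, by linarith, by linarith, by linarith, by linarith⟩

lemma mapT3_mem_PiG {g : Fin 4 → ℝ} (hg : g ∈ PiG) : mapT3 g ∈ PiG := by
  rw [mem_PiG_iff] at hg ⊢
  obtain ⟨h0, h1, h2, h3, h4, h5⟩ := hg
  simp only [mapT3, Matrix.cons_val_zero, Matrix.cons_val_one, Matrix.head_cons,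
    Matrix.cons_val_two, Matrix.tail_cons, Matrix.cons_val_three]
  refine ⟨h0, h1, by linarith, by linarith, by linarith, by linarith⟩

lemma gdual_mem_PiG {g : Fin 4 → ℝ} (hg : g ∈ PiG) : gdual g ∈ PiG := by
  rw [mem_PiG_iff] at hg ⊢
  obtain ⟨h0, h1, h2, h3, h4, h5⟩ := hg
  simp only [gdual, Matrix.cons_val_zero, Matrix.cons_val_one, Matrix.head_cons,
    Matrix.cons_val_two, Matrix.tail_cons, Matrix.cons_val_three]
  refine ⟨by linarith, by linarith, by linarith, by linarith, by linarith, by linarith⟩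

lemma image_PiG_of_involutive {m : (Fin 4 → ℝ) → (Fin 4 → ℝ)}
    (hm : Function.Involutive m) (h : ∀ g ∈ PiG, m g ∈ PiG) : m '' PiG = PiG := by
  apply Set.Subset.antisymm
  · rintro _ ⟨g, hg, rfl⟩; exact h g hg
  · intro g hg
    exact ⟨m g, h g hg, hm g⟩

/-- Theorem 3.1: the group `G` generated by `T₂`, `T₃` and `J_N` is
isomorphic to `S₄`, contains the mirror map, and every element of `G` maps `Π_G`
onto `Π_G`. -/
theorem statement8 :
    Nonempty (↥(Subgroup.closure ({permT2, permT3, permJ} :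
        Set (Equiv.Perm (Fin 4 → ℝ)))) ≃* Equiv.Perm (Fin 4)) ∧
    permM ∈ Subgroup.closure ({permT2, permT3, permJ} : Set (Equiv.Perm (Fin 4 → ℝ))) ∧
    ∀ σ ∈ Subgroup.closure ({permT2, permT3, permJ} : Set (Equiv.Perm (Fin 4 → ℝ))),
      (⇑σ) '' PiG = PiG := by
  refine ⟨⟨((MonoidHom.ofInjective permOf_injective).trans
      (MulEquiv.subgroupCongr range_permOf)).symm⟩, ?_, ?_⟩
  · rw [← range_permOf]
    exact ⟨Equiv.swap 0 2 * Equiv.swap 1 3, permOf_M⟩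
  · intro σ hσ
    refine Subgroup.closure_induction (p := fun (σ : Equiv.Perm (Fin 4 → ℝ)) _ => ⇑σ '' PiG = PiG) ?_ ?_ ?_ ?_ hσ
    · intro x hx
      simp only [Set.mem_insert_iff, Set.mem_singleton_iff] at hx
      rcases hx with rfl | rfl | rfl
      · have : ⇑permT2 = mapT2 := rfl
        rw [this]
        exact image_PiG_of_involutive mapT2_involutive (fun g hg => mapT2_mem_PiG hg)
      · have : ⇑permT3 = mapT3 := rfl
        rw [this]
        exact image_PiG_of_involutive mapT3_involutive (fun g hg => mapT3_mem_PiG hg)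
      · have : ⇑permJ = gdual := rfl
        rw [this]
        exact image_PiG_of_involutive gdual_involutive (fun g hg => gdual_mem_PiG hg)
    · simp
    · intro x y hx hy px py
      rw [Equiv.Perm.coe_mul, Set.image_comp, py, px]
    · intro x hx px
      have h : ⇑x⁻¹ '' (⇑x '' PiG) = PiG := by
        rw [Equiv.Perm.inv_def]; exact Equiv.symm_image_image x PiG
      rw [px] at h; exact h


end Heun
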